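/- For a linear classifier with logit a_θ(x) = θ ⬝ v(x) (inner product in ℝ^d), the gradient of the entropy loss Ent(θ ⬝ v) with respect to the parameter θ equals -ŷ · C · v, where ŷ = 1 if θ ⬝ v > 0 and ŷ = -1 otherwise, and C = |log((1-p)/p) · p · (1-p)| > 0 with p = σ(θ ⬝ v), provided θ ⬝ v ≠ 0. -/

import Mathlib

open RealInnerProductSpace

noncomputable def sigmoid (a : ℝ) : ℝ := 1 / (1 + Real.exp (-a))

noncomputable def sigEnt (a : ℝ) : ℝ :=
  -sigmoid a * Real.log (sigmoid a) - (1 - sigmoid a) * Real.log (1 - sigmoid a)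

lemma sigmoid_pos (a : ℝ) : 0 < sigmoid a := by
  unfold sigmoid; positivity

lemma sigmoid_lt_one (a : ℝ) : sigmoid a < 1 := by
  unfold sigmoid
  rw [div_lt_one (by positivity)]
  linarith [Real.exp_pos (-a)]

lemma hasDerivAt_sigmoid (a : ℝ) :
    HasDerivAt sigmoid (sigmoid a * (1 - sigmoid a)) a := by
  have h1 : HasDerivAt (fun a : ℝ => 1 + Real.exp (-a)) (-Real.exp (-a)) a := by
    simpa using ((Real.hasDerivAt_exp (-a)).comp a ((hasDerivAt_id a).neg)).const_add 1
  have hne : (1 : ℝ) + Real.exp (-a) ≠ 0 := by positivity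
  have h2 := h1.inv hne
  convert h2 using 1
  · rfl
  · rfl
  · ext x; simp [sigmoid, one_div]
  · unfold sigmoid
    field_simp
    ring

lemma hasDerivAt_sigEnt (a : ℝ) :
    HasDerivAt sigEnt
      (Real.log ((1 - sigmoid a) / sigmoid a) * (sigmoid a * (1 - sigmoid a))) a := by
  have hpos := sigmoid_pos a
  have hlt := sigmoid_lt_one a
  have hs := hasDerivAt_sigmoid a
  set s := sigmoid a with hsdef
  have hsne : s ≠ 0 := ne_of_gt hpos
  have h1ne : 1 - s ≠ 0 := by linarith
  have hlog1 : HasDerivAt (fun a => Real.log (sigmoid a)) (s * (1 - s) / s) a :=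
    hs.log hsne
  have hsub : HasDerivAt (fun a => 1 - sigmoid a) (-(s * (1 - s))) a := by
    exact ((hasDerivAt_const a (1:ℝ)).sub hs).congr_deriv (by ring)
  have hlog2 : HasDerivAt (fun a => Real.log (1 - sigmoid a)) (-(s * (1 - s)) / (1 - s)) a :=
    hsub.log h1ne
  have h1 : HasDerivAt (fun a => -sigmoid a * Real.log (sigmoid a))
      (-(s * (1 - s)) * Real.log s + -s * (s * (1 - s) / s)) a := hs.neg.mul hlog1
  have h2 : HasDerivAt (fun a => (1 - sigmoid a) * Real.log (1 - sigmoid a))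
      (-(s * (1 - s)) * Real.log (1 - s) + (1 - s) * (-(s * (1 - s)) / (1 - s))) a :=
    hsub.mul hlog2
  have := h1.sub h2
  convert this using 1
  · rfl
  · rfl
  · rfl
  rw [Real.log_div h1ne hsne]
  field_simp
  ring

lemma hasGradientAt_comp {d : ℕ} (θ v : EuclideanSpace ℝ (Fin d)) (D : ℝ)
    (hd : HasDerivAt sigEnt D ⟪θ, v⟫) :
    HasGradientAt (fun θ' : EuclideanSpace ℝ (Fin d) => sigEnt ⟪θ', v⟫) (D • v) θ := by
  rw [hasGradientAt_iff_hasFDerivAt]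
  have hL : HasFDerivAt (fun θ' : EuclideanSpace ℝ (Fin d) => ⟪θ', v⟫)
      (innerSL ℝ v) θ := by
    have := (innerSL ℝ v).hasFDerivAt (x := θ)
    apply this.congr_of_eventuallyEq
    filter_upwards with w
    simp [real_inner_comm]
  have := hd.comp_hasFDerivAt θ hL
  convert this using 1
  · rfl
  · rfl
  ext w
  simp [inner_smul_left, real_inner_comm, mul_comm]

theorem gradient_entropy_loss {d : ℕ} (θ v : EuclideanSpace ℝ (Fin d))
    (ha : ⟪θ, v⟫ ≠ 0)
    (yhat : ℝ) (hy : yhat = if 0 < ⟪θ, v⟫ then 1 else -1)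
    (p : ℝ) (hp : p = sigmoid ⟪θ, v⟫)
    (C : ℝ) (hC : C = |Real.log ((1 - p) / p) * p * (1 - p)|) :
    gradient (fun θ' : EuclideanSpace ℝ (Fin d) => sigEnt ⟪θ', v⟫) θ
      = (-yhat * C) • v ∧ 0 < C := by
  have hpos : 0 < p := hp ▸ sigmoid_pos _
  have hlt : p < 1 := hp ▸ sigmoid_lt_one _
  set a := (⟪θ, v⟫ : ℝ) with hadef
  have hD : HasDerivAt sigEnt (Real.log ((1 - p) / p) * (p * (1 - p))) a := by
    rw [hp]; exact hasDerivAt_sigEnt a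
  set D := Real.log ((1 - p) / p) * (p * (1 - p)) with hDdef
  have hgrad : gradient (fun θ' : EuclideanSpace ℝ (Fin d) => sigEnt ⟪θ', v⟫) θ = D • v :=
    (hasGradientAt_comp θ v D hD).gradient
  have hCD : C = |D| := by rw [hC, hDdef, mul_assoc]
  have hq : 0 < (1 - p) / p := div_pos (by linarith) hpos
  rcases lt_or_gt_of_ne ha with hneg | hposit
  · -- a < 0 : exp(-a) > 1, p < 1/2
    have hphalf : p < 1/2 := by
      rw [hp]; unfold sigmoid
      rw [div_lt_div_iff₀ (by positivity) (by norm_num)]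
      have : 1 < Real.exp (-a) := by
        rw [← Real.exp_zero]; exact Real.exp_lt_exp.2 (by linarith)
      linarith
    have hlog : 0 < Real.log ((1 - p) / p) := by
      apply Real.log_pos
      rw [lt_div_iff₀ hpos]; linarith
    have hDpos : 0 < D := by
      apply mul_pos hlog; apply mul_pos hpos; linarith
    have hy' : yhat = -1 := by rw [hy, if_neg (not_lt.2 (le_of_lt hneg))]
    have hCeq : C = D := by rw [hCD, abs_of_pos hDpos]
    refine ⟨?_, hCeq ▸ hDpos⟩
    rw [hgrad, hy', hCeq]; ring_nf
  · have hphalf : 1/2 < p := by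
      rw [hp]; unfold sigmoid
      rw [div_lt_div_iff₀ (by norm_num) (by positivity)]
      have : Real.exp (-a) < 1 := by
        rw [← Real.exp_zero]; exact Real.exp_lt_exp.2 (by linarith)
      linarith
    have hlog : Real.log ((1 - p) / p) < 0 := by
      apply Real.log_neg hq
      rw [div_lt_one hpos]; linarith
    have hDneg : D < 0 := by
      apply mul_neg_of_neg_of_pos hlog; apply mul_pos hpos; linarith
    have hy' : yhat = 1 := by rw [hy, if_pos hposit]
    have hCeq : C = -D := by rw [hCD, abs_of_neg hDneg]
    refine ⟨?_, by linarith⟩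
    rw [hgrad, hy', hCeq]; ring_nf
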